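/- Let N ≥ 2, T ≥ 1 with α = (2/3)·√(2 ln N / T) < 1/2. For each t ∈ {1,...,T} and i ∈ {1,...,N}, let q_{i,t} ∈ [0,1] and p_t ∈ {0,1}. Define w_i^1 = 1 and w_i^{t+1} = w_i^t·(1 - α·(q_{i,t} - p_t)²). Then Σ_{t=1}^T ( Σ_i w_i^t·q_{i,t} / Σ_i w_i^t - p_t )² - min_{k ∈ {1,...,N}} Σ_{t=1}^T (q_{k,t} - p_t)² ≤ 3·√(T·ln N / 2). -/

import Mathlib

lemma log_one_sub_lb {x : ℝ} (h0 : 0 ≤ x) (h1 : x ≤ 1/2) :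
    -x - x^2 ≤ Real.log (1 - x) := by
  have hx1 : (0:ℝ) < 1 - x := by linarith
  rw [Real.le_log_iff_exp_le hx1]
  set f : ℝ → ℝ := fun y => (1 - y) * Real.exp (y + y^2) with hf
  have hder : ∀ y : ℝ, HasDerivAt f (Real.exp (y + y^2) * (y - 2*y^2)) y := by
    intro y
    have h1' : HasDerivAt (fun y : ℝ => y + y^2) (1 + 2*y) y := by
      simpa using ((hasDerivAt_id' y).fun_add ((hasDerivAt_pow 2 y)))
    have h2 : HasDerivAt (fun y : ℝ => Real.exp (y + y^2)) (Real.exp (y + y^2) * (1 + 2*y)) y :=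
      (Real.hasDerivAt_exp _).comp y h1'
    have h3 : HasDerivAt (fun y : ℝ => 1 - y) (-1) y := by
      simpa using ((hasDerivAt_const y (1:ℝ)).fun_sub (hasDerivAt_id' y))
    have := h3.fun_mul h2
    refine this.congr_deriv ?_
    ring
  have hmono : MonotoneOn f (Set.Icc 0 (1/2)) := by
    apply monotoneOn_of_deriv_nonneg (convex_Icc _ _)
    · exact (Continuous.mul (by continuity) (by continuity)).continuousOn
    · intro y _
      exact (hder y).differentiableAt.differentiableWithinAt
    · intro y hy
      rw [interior_Icc] at hy
      rw [(hder y).deriv]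
      have : 0 ≤ y - 2*y^2 := by nlinarith [hy.1, hy.2]
      positivity
  have h01 : f 0 ≤ f x := hmono (by constructor <;> norm_num) ⟨h0, h1⟩ h0
  have hf0 : f 0 = 1 := by simp [hf]
  rw [hf0] at h01
  have hkey : 1 ≤ (1 - x) * Real.exp (x + x^2) := h01
  have hexp : Real.exp (-x - x^2) = (Real.exp (x + x^2))⁻¹ := by
    rw [← Real.exp_neg]; ring_nf
  rw [hexp, inv_le_iff_one_le_mul₀ (Real.exp_pos _)]
  linarith [hkey]

set_option maxHeartbeats 2000000 in
theorem main_regret_theorem (N T : ℕ) (hN : 2 ≤ N) (hT : 1 ≤ T)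
    (α : ℝ) (hαdef : α = (2/3) * Real.sqrt (2 * Real.log N / T)) (hα2 : α < 1/2)
    (q : Fin N → ℕ → ℝ) (hq : ∀ i, ∀ t ∈ Finset.Icc 1 T, q i t ∈ Set.Icc (0:ℝ) 1)
    (p : ℕ → ℝ) (hp : ∀ t ∈ Finset.Icc 1 T, p t = 0 ∨ p t = 1)
    (w : Fin N → ℕ → ℝ) (hw1 : ∀ i, w i 1 = 1)
    (hrec : ∀ i, ∀ t ∈ Finset.Icc 1 T,
      w i (t + 1) = w i t * (1 - α * (q i t - p t)^2)) :
    ∑ t ∈ Finset.Icc 1 T, ((∑ i, w i t * q i t) / (∑ i, w i t) - p t)^2 -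
      (⨅ k : Fin N, ∑ t ∈ Finset.Icc 1 T, (q k t - p t)^2) ≤
      3 * Real.sqrt (T * Real.log N / 2) := by
  classical
  have hNpos : 0 < N := by omega
  haveI : Nonempty (Fin N) := ⟨⟨0, hNpos⟩⟩
  have hT0 : (0:ℝ) < T := by exact_mod_cast hT
  have hN1 : (1:ℝ) < N := by exact_mod_cast hN
  have hL : 0 < Real.log N := Real.log_pos hN1
  have hα0 : 0 < α := by
    rw [hαdef]
    exact mul_pos (by norm_num) (Real.sqrt_pos.mpr (by positivity))
  have hℓ01 : ∀ i, ∀ t ∈ Finset.Icc 1 T, 0 ≤ (q i t - p t)^2 ∧ (q i t - p t)^2 ≤ 1 := by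
    intro i t ht
    obtain ⟨hq0, hq1⟩ := hq i t ht
    refine ⟨sq_nonneg _, ?_⟩
    rcases hp t ht with h | h <;> rw [h] <;> nlinarith
  have hfac : ∀ i, ∀ t ∈ Finset.Icc 1 T, 1/2 ≤ 1 - α * (q i t - p t)^2 := by
    intro i t ht
    obtain ⟨h0, h1⟩ := hℓ01 i t ht
    nlinarith
  have hwpos : ∀ i, ∀ t, 1 ≤ t → t ≤ T + 1 → 0 < w i t := by
    intro i t
    induction t with
    | zero => omega
    | succ u ih =>
      intro h1 h2
      rcases Nat.lt_or_ge u 1 with h | h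
      · have : u = 0 := by omega
        subst this
        rw [hw1]; norm_num
      · have huT : u ∈ Finset.Icc 1 T := Finset.mem_Icc.mpr ⟨h, by omega⟩
        rw [hrec i u huT]
        have h3 := hfac i u huT
        have h4 := ih h (by omega)
        nlinarith
  have hwprod : ∀ i, ∀ u, u ≤ T →
      w i (u+1) = ∏ t ∈ Finset.Icc 1 u, (1 - α * (q i t - p t)^2) := by
    intro i u
    induction u with
    | zero => intro _; simp [hw1]
    | succ v ih =>
      intro h
      rw [hrec i (v+1) (Finset.mem_Icc.mpr ⟨by omega, h⟩), ih (by omega),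
        Finset.prod_Icc_succ_top (by omega : 1 ≤ v+1)]
  have hWpos : ∀ t, 1 ≤ t → t ≤ T + 1 → 0 < ∑ i, w i t := fun t h1 h2 =>
    Finset.sum_pos (fun i _ => hwpos i t h1 h2) Finset.univ_nonempty
  have hLb0 : ∀ t ∈ Finset.Icc 1 T,
      0 ≤ (∑ i, w i t * (q i t - p t)^2) / (∑ i, w i t) := by
    intro t ht
    rw [Finset.mem_Icc] at ht
    apply div_nonneg _ (hWpos t ht.1 (by omega)).le
    exact Finset.sum_nonneg fun i _ =>
      mul_nonneg (hwpos i t ht.1 (by omega)).le (sq_nonneg _)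
  have hLb1 : ∀ t ∈ Finset.Icc 1 T,
      (∑ i, w i t * (q i t - p t)^2) / (∑ i, w i t) ≤ 1 := by
    intro t ht
    have ht' := Finset.mem_Icc.mp ht
    rw [div_le_one (hWpos t ht'.1 (by omega))]
    apply Finset.sum_le_sum
    intro i _
    have h1 := (hℓ01 i t ht).2
    have h2 := hwpos i t ht'.1 (by omega)
    nlinarith
  have hWrec : ∀ t ∈ Finset.Icc 1 T, ∑ i, w i (t+1) =
      (∑ i, w i t) * (1 - α * ((∑ i, w i t * (q i t - p t)^2) / (∑ i, w i t))) := by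
    intro t ht
    have ht' := Finset.mem_Icc.mp ht
    have hW := hWpos t ht'.1 (by omega)
    have h1 : ∑ i, w i (t+1) = ∑ i, w i t * (1 - α * (q i t - p t)^2) :=
      Finset.sum_congr rfl (fun i _ => hrec i t ht)
    have h2 : ∑ i, w i t * (1 - α * (q i t - p t)^2) =
        (∑ i, w i t) - α * ∑ i, w i t * (q i t - p t)^2 := by
      rw [Finset.mul_sum, ← Finset.sum_sub_distrib]
      exact Finset.sum_congr rfl (fun i _ => by ring)
    rw [h1, h2]
    field_simp
  have hWprod : ∀ u, u ≤ T → ∑ i, w i (u+1) =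
      N * ∏ t ∈ Finset.Icc 1 u,
        (1 - α * ((∑ i, w i t * (q i t - p t)^2) / (∑ i, w i t))) := by
    intro u
    induction u with
    | zero =>
      intro _
      rw [show Finset.Icc 1 0 = ∅ by rfl]
      simp [hw1]
    | succ v ih =>
      intro h
      rw [hWrec (v+1) (Finset.mem_Icc.mpr ⟨by omega, h⟩)]
      nth_rewrite 1 [ih (by omega)]
      rw [Finset.prod_Icc_succ_top (by omega : 1 ≤ v+1), mul_assoc]
  have hLbfac : ∀ t ∈ Finset.Icc 1 T,
      0 < 1 - α * ((∑ i, w i t * (q i t - p t)^2) / (∑ i, w i t)) := by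
    intro t ht
    have h1 := hLb0 t ht
    have h2 := hLb1 t ht
    nlinarith
  have hupper : Real.log (∑ i, w i (T+1)) ≤ Real.log N -
      α * ∑ t ∈ Finset.Icc 1 T, (∑ i, w i t * (q i t - p t)^2) / (∑ i, w i t) := by
    rw [hWprod T le_rfl, Real.log_mul (by positivity)
      (Finset.prod_ne_zero_iff.mpr fun t ht => (hLbfac t ht).ne'),
      Real.log_prod (fun t ht => (hLbfac t ht).ne')]
    have h1 : ∑ t ∈ Finset.Icc 1 T,
        Real.log (1 - α * ((∑ i, w i t * (q i t - p t)^2) / (∑ i, w i t))) ≤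
        ∑ t ∈ Finset.Icc 1 T,
        (-(α * ((∑ i, w i t * (q i t - p t)^2) / (∑ i, w i t)))) := by
      apply Finset.sum_le_sum
      intro t ht
      have := Real.log_le_sub_one_of_pos (hLbfac t ht)
      linarith
    have h2 : ∑ t ∈ Finset.Icc 1 T,
        (-(α * ((∑ i, w i t * (q i t - p t)^2) / (∑ i, w i t)))) =
        -(α * ∑ t ∈ Finset.Icc 1 T, (∑ i, w i t * (q i t - p t)^2) / (∑ i, w i t)) := by
      rw [Finset.mul_sum, ← Finset.sum_neg_distrib]
    rw [h2] at h1
    linarith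
  have hlower : ∀ k : Fin N,
      -α * (∑ t ∈ Finset.Icc 1 T, (q k t - p t)^2) - α^2 * T ≤
        Real.log (∑ i, w i (T+1)) := by
    intro k
    have hwk : w k (T+1) ≤ ∑ i, w i (T+1) :=
      Finset.single_le_sum (fun i _ => (hwpos i (T+1) (by omega) le_rfl).le)
        (Finset.mem_univ k)
    have hwk0 : 0 < w k (T+1) := hwpos k (T+1) (by omega) le_rfl
    have hlog1 : Real.log (w k (T+1)) ≤ Real.log (∑ i, w i (T+1)) :=
      Real.log_le_log hwk0 hwk
    have hlogprod : Real.log (w k (T+1)) =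
        ∑ t ∈ Finset.Icc 1 T, Real.log (1 - α * (q k t - p t)^2) := by
      rw [hwprod k T le_rfl, Real.log_prod (fun t ht => by
        have := hfac k t ht; intro hc; rw [hc] at this; norm_num at this)]
    have hsum : ∑ t ∈ Finset.Icc 1 T,
        (-(α * (q k t - p t)^2) - (α * (q k t - p t)^2)^2) ≤
        ∑ t ∈ Finset.Icc 1 T, Real.log (1 - α * (q k t - p t)^2) := by
      apply Finset.sum_le_sum
      intro t ht
      obtain ⟨h0, h1⟩ := hℓ01 k t ht
      have hx0 : 0 ≤ α * (q k t - p t)^2 := mul_nonneg hα0.le h0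
      have hx1 : α * (q k t - p t)^2 ≤ 1/2 := by nlinarith
      exact log_one_sub_lb hx0 hx1
    have hsum2 : -α * (∑ t ∈ Finset.Icc 1 T, (q k t - p t)^2) - α^2 * T ≤
        ∑ t ∈ Finset.Icc 1 T,
          (-(α * (q k t - p t)^2) - (α * (q k t - p t)^2)^2) := by
      have hterm : ∀ t ∈ Finset.Icc 1 T,
          -α * (q k t - p t)^2 - α^2 ≤
            -(α * (q k t - p t)^2) - (α * (q k t - p t)^2)^2 := by
        intro t ht
        obtain ⟨h0, h1⟩ := hℓ01 k t ht
        have hℓsq : ((q k t - p t)^2)^2 ≤ 1 := by nlinarith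
        nlinarith [mul_le_mul_of_nonneg_left hℓsq (sq_nonneg α)]
      calc -α * (∑ t ∈ Finset.Icc 1 T, (q k t - p t)^2) - α^2 * T
          = ∑ t ∈ Finset.Icc 1 T, (-α * (q k t - p t)^2 - α^2) := by
            rw [Finset.sum_sub_distrib, ← Finset.mul_sum, Finset.sum_const,
              Nat.card_Icc]
            have hc : T + 1 - 1 = T := by omega
            rw [hc, nsmul_eq_mul]
            ring
        _ ≤ _ := Finset.sum_le_sum hterm
    linarith [hlogprod ▸ hsum]
  have hmain : ∀ k : Fin N,
      ∑ t ∈ Finset.Icc 1 T, (∑ i, w i t * (q i t - p t)^2) / (∑ i, w i t) ≤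
      (∑ t ∈ Finset.Icc 1 T, (q k t - p t)^2) + α * T + Real.log N / α := by
    intro k
    have h3 : α * (∑ t ∈ Finset.Icc 1 T,
          (∑ i, w i t * (q i t - p t)^2) / (∑ i, w i t)) ≤
        α * (∑ t ∈ Finset.Icc 1 T, (q k t - p t)^2) + α^2 * T + Real.log N := by
      linarith [hlower k, hupper]
    have h5 : α * ((∑ t ∈ Finset.Icc 1 T, (q k t - p t)^2) + α * T + Real.log N / α) =
        α * (∑ t ∈ Finset.Icc 1 T, (q k t - p t)^2) + α^2 * T + Real.log N := by
      field_simp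
    have h6 : α * (∑ t ∈ Finset.Icc 1 T,
          (∑ i, w i t * (q i t - p t)^2) / (∑ i, w i t)) ≤
        α * ((∑ t ∈ Finset.Icc 1 T, (q k t - p t)^2) + α * T + Real.log N / α) := by
      rw [h5]; exact h3
    exact le_of_mul_le_mul_left h6 hα0
  have hjensen : ∀ t ∈ Finset.Icc 1 T,
      ((∑ i, w i t * q i t) / (∑ i, w i t) - p t)^2 ≤
        (∑ i, w i t * (q i t - p t)^2) / (∑ i, w i t) := by
    intro t ht
    have ht' := Finset.mem_Icc.mp ht
    have hW : 0 < ∑ i, w i t := hWpos t ht'.1 (by omega)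
    have hwt : ∀ i, 0 ≤ w i t := fun i => (hwpos i t ht'.1 (by omega)).le
    have hcs := Finset.sum_mul_sq_le_sq_mul_sq Finset.univ
      (fun i => Real.sqrt (w i t)) (fun i => Real.sqrt (w i t) * (q i t - p t))
    have e1 : ∀ i : Fin N, Real.sqrt (w i t) * (Real.sqrt (w i t) * (q i t - p t)) =
        w i t * (q i t - p t) := fun i => by
      rw [← mul_assoc, Real.mul_self_sqrt (hwt i)]
    have e2 : ∀ i : Fin N, (Real.sqrt (w i t))^2 = w i t := fun i => Real.sq_sqrt (hwt i)
    have e3 : ∀ i : Fin N, (Real.sqrt (w i t) * (q i t - p t))^2 =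
        w i t * (q i t - p t)^2 := fun i => by
      rw [mul_pow, Real.sq_sqrt (hwt i)]
    simp only [e1, e2, e3] at hcs
    have e4 : ∑ i, w i t * (q i t - p t) =
        (∑ i, w i t * q i t) - p t * ∑ i, w i t := by
      rw [Finset.mul_sum, ← Finset.sum_sub_distrib]
      exact Finset.sum_congr rfl (fun i _ => by ring)
    rw [e4] at hcs
    have e5 : ((∑ i, w i t * q i t) / (∑ i, w i t) - p t)^2 =
        ((∑ i, w i t * q i t) - p t * ∑ i, w i t)^2 / (∑ i, w i t)^2 := by
      rw [div_sub' hW.ne', div_pow]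
      ring
    rw [e5]
    rw [div_le_div_iff₀ (by positivity) hW]
    nlinarith [hcs, hW]
  have hsumj : ∑ t ∈ Finset.Icc 1 T, ((∑ i, w i t * q i t) / (∑ i, w i t) - p t)^2 ≤
      ∑ t ∈ Finset.Icc 1 T, (∑ i, w i t * (q i t - p t)^2) / (∑ i, w i t) :=
    Finset.sum_le_sum hjensen
  obtain ⟨k0, hk0⟩ := Finite.exists_min
    (fun k : Fin N => ∑ t ∈ Finset.Icc 1 T, (q k t - p t)^2)
  have hiInf : (⨅ k : Fin N, ∑ t ∈ Finset.Icc 1 T, (q k t - p t)^2) =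
      ∑ t ∈ Finset.Icc 1 T, (q k0 t - p t)^2 :=
    le_antisymm (ciInf_le (Finite.bddBelow_range _) k0) (le_ciInf hk0)
  have hα2' : α^2 = (4/9) * (2 * Real.log N / T) := by
    rw [hαdef, mul_pow, Real.sq_sqrt (by positivity)]
    norm_num
  have hα2T : α^2 * T = (8/9) * Real.log N := by
    rw [hα2']
    field_simp
    ring
  have hsα : Real.sqrt (T * Real.log N / 2) * Real.sqrt (2 * Real.log N / T) =
      Real.log N := by
    rw [← Real.sqrt_mul (by positivity)]
    have h : (T * Real.log N / 2) * (2 * Real.log N / T) = (Real.log N)^2 := by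
      field_simp
    rw [h, Real.sqrt_sq hL.le]
  have hαs : α * Real.sqrt (T * Real.log N / 2) = (2/3) * Real.log N := by
    rw [hαdef]
    calc (2/3) * Real.sqrt (2 * Real.log N / T) * Real.sqrt (T * Real.log N / 2)
        = (2/3) * (Real.sqrt (T * Real.log N / 2) * Real.sqrt (2 * Real.log N / T)) := by
          ring
      _ = (2/3) * Real.log N := by rw [hsα]
  have hLα : Real.log N / α * α = Real.log N := div_mul_cancel₀ _ hα0.ne'
  have hfin : α * T + Real.log N / α ≤ 3 * Real.sqrt (T * Real.log N / 2) := by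
    nlinarith [hα0, hα2T, hαs, hLα, hL]
  rw [hiInf]
  calc ∑ t ∈ Finset.Icc 1 T, ((∑ i, w i t * q i t) / (∑ i, w i t) - p t)^2 -
        ∑ t ∈ Finset.Icc 1 T, (q k0 t - p t)^2
      ≤ (∑ t ∈ Finset.Icc 1 T, (∑ i, w i t * (q i t - p t)^2) / (∑ i, w i t)) -
        ∑ t ∈ Finset.Icc 1 T, (q k0 t - p t)^2 := by linarith [hsumj]
    _ ≤ α * T + Real.log N / α := by linarith [hmain k0]
    _ ≤ 3 * Real.sqrt (T * Real.log N / 2) := hfin
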